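/- Let η and χ be probability measures on ℝ with finite first moments and equal means, with P_η(k) ≤ P_χ(k) for all k ∈ ℝ. Suppose x ∈ ℝ is such that P_χ(x) − P_η(x) = 0. Then for every martingale coupling π of η and χ one has π((−∞,x) × (x,∞)) + π((x,∞) × (−∞,x)) = 0; i.e. no mass crosses the point x. -/

import Mathlib

open MeasureTheory Set

/-- The put price function `P_η(k) = ∫ (k-x)⁺ dη(x)`. -/
noncomputable def putPrice (η : Measure ℝ) (k : ℝ) : ℝ := ∫ x, max (k - x) 0 ∂η

/-- `π` is a martingale coupling of `μ` and `ν`. -/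
def IsMartingaleCoupling (μ ν : Measure ℝ) (π : Measure (ℝ × ℝ)) : Prop :=
  IsProbabilityMeasure π ∧ π.map Prod.fst = μ ∧ π.map Prod.snd = ν ∧
    ∀ B : Set ℝ, MeasurableSet B →
      ∫ p in B ×ˢ (Set.univ : Set ℝ), p.2 ∂π = ∫ x in B, x ∂μ

/-- The American-put payoff under coupling `π` and exercise set `B`. -/
noncomputable def amPayoff (K₁ K₂ : ℝ) (π : Measure (ℝ × ℝ)) (B : Set ℝ) : ℝ :=
  ∫ p, (B.indicator (fun x => max (K₁ - x) 0) p.1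
      + Bᶜ.indicator (fun _ => max (K₂ - p.2) 0) p.1) ∂π

/-- If `D(x) = P_χ(x) - P_η(x) = 0` then no mass crosses `x` under any martingale
coupling of `η` and `χ`. -/
theorem no_mass_crosses
    (η χ : Measure ℝ) [IsProbabilityMeasure η] [IsProbabilityMeasure χ]
    (hηint : Integrable (fun z => z) η) (hχint : Integrable (fun z => z) χ)
    (hmean : ∫ z, z ∂η = ∫ z, z ∂χ)
    (hconv : ∀ k : ℝ, putPrice η k ≤ putPrice χ k)
    (x : ℝ) (hx : putPrice χ x - putPrice η x = 0)
    (π : Measure (ℝ × ℝ)) (hπ : IsMartingaleCoupling η χ π) :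
    π (Set.Iio x ×ˢ Set.Ioi x) + π (Set.Ioi x ×ˢ Set.Iio x) = 0 := by
  obtain ⟨hprob, hfst, hsnd, hmart⟩ := hπ
  set g : ℝ → ℝ := fun y => max (x - y) 0 with hg_def
  have hg_cont : Continuous g := (continuous_const.sub continuous_id).max continuous_const
  have hg_int_χ : Integrable g χ := ((integrable_const x).sub hχint).pos_part
  have hg_int_η : Integrable g η := ((integrable_const x).sub hηint).pos_part
  -- integrability of p ↦ g p.2 and p ↦ p.2 w.r.t. π
  have hf_int : Integrable (fun p : ℝ × ℝ => g p.2) π := by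
    have h1 : Integrable g (π.map Prod.snd) := hsnd ▸ hg_int_χ
    exact (integrable_map_measure hg_cont.aestronglyMeasurable
      measurable_snd.aemeasurable).mp h1
  have hsnd_int : Integrable (fun p : ℝ × ℝ => p.2) π := by
    have h1 : Integrable (fun z : ℝ => z) (π.map Prod.snd) := hsnd ▸ hχint
    exact (integrable_map_measure aestronglyMeasurable_id
      measurable_snd.aemeasurable).mp h1
  have hlin_int : Integrable (fun p : ℝ × ℝ => x - p.2) π := (integrable_const x).sub hsnd_int
  -- the set s
  set s : Set (ℝ × ℝ) := Prod.fst ⁻¹' Iio x with hs_def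
  have hs_meas : MeasurableSet s := measurable_fst measurableSet_Iio
  have hπs : π s = η (Iio x) := by
    rw [← hfst, Measure.map_apply measurable_fst measurableSet_Iio]
  -- total integral equals putPrice χ x
  have htot : ∫ p, g p.2 ∂π = putPrice χ x := by
    rw [putPrice, ← hsnd,
      integral_map measurable_snd.aemeasurable hg_cont.aestronglyMeasurable]
  -- ∫ z, g z ∂η = ∫ z in Iio x, (x - z) ∂η
  have hηput : putPrice η x = ∫ z in Iio x, (x - z) ∂η := by
    rw [putPrice, ← integral_add_compl measurableSet_Iio hg_int_η]
    have h1 : ∫ z in Iio x, g z ∂η = ∫ z in Iio x, (x - z) ∂η := by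
      refine setIntegral_congr_fun measurableSet_Iio fun z hz => ?_
      simp only [hg_def]
      exact max_eq_left (by simp only [mem_Iio] at hz; linarith)
    have h2 : ∫ z in (Iio x)ᶜ, g z ∂η = 0 := by
      have heq : EqOn g (fun _ => (0:ℝ)) (Iio x)ᶜ := fun z hz => by
        simp only [mem_compl_iff, mem_Iio, not_lt] at hz
        exact max_eq_right (by linarith)
      rw [setIntegral_congr_fun measurableSet_Iio.compl heq, integral_zero]
    rw [h1, h2, add_zero]
  -- martingale property and measure computation give:
  have hkey : ∫ p in s, (x - p.2) ∂π = putPrice η x := by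
    have hm := hmart (Iio x) measurableSet_Iio
    rw [Set.prod_univ] at hm
    rw [integral_sub (integrable_const x).integrableOn hsnd_int.integrableOn,
      setIntegral_const, hm, measureReal_def, hπs, hηput,
      integral_sub (integrable_const x).integrableOn hηint.integrableOn,
      setIntegral_const, measureReal_def]
  have hPeq : putPrice η x = putPrice χ x := by linarith
  -- A and C
  have hA_ge : ∫ p in s, (x - p.2) ∂π ≤ ∫ p in s, g p.2 ∂π :=
    integral_mono hlin_int.integrableOn hf_int.integrableOn
      (fun p => le_max_left _ _)
  have hC_nonneg : 0 ≤ ∫ p in sᶜ, g p.2 ∂π :=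
    integral_nonneg fun p => le_max_right _ _
  have hsplit : ∫ p in s, g p.2 ∂π + ∫ p in sᶜ, g p.2 ∂π = putPrice χ x := by
    rw [integral_add_compl hs_meas hf_int, htot]
  have hA_eq : ∫ p in s, g p.2 ∂π = putPrice η x := by
    rw [hkey] at hA_ge; linarith [hPeq ▸ hsplit]
  have hC_eq : ∫ p in sᶜ, g p.2 ∂π = 0 := by linarith [hPeq ▸ hsplit]
  -- measurability of g ∘ snd
  have hgs_meas : Measurable fun p : ℝ × ℝ => g p.2 :=
    (hg_cont.measurable).comp measurable_snd
  -- first conclusion: π (Ioi x ×ˢ Iio x) = 0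
  have h1 : π (Set.Ioi x ×ˢ Set.Iio x) = 0 := by
    have hae : (fun p : ℝ × ℝ => g p.2) =ᵐ[π.restrict sᶜ] 0 :=
      (integral_eq_zero_iff_of_nonneg_ae
        (Filter.Eventually.of_forall fun p => le_max_right _ _)
        hf_int.integrableOn).mp hC_eq
    have hz : π.restrict sᶜ {p : ℝ × ℝ | ¬ g p.2 = 0} = 0 := by
      rw [Filter.EventuallyEq, ae_iff] at hae
      simpa using hae
    rw [Measure.restrict_apply (show MeasurableSet {p : ℝ × ℝ | ¬ g p.2 = 0} from
      (hgs_meas (measurableSet_singleton 0)).compl)] at hz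
    refine measure_mono_null (fun p hp => ?_) hz
    obtain ⟨hp1, hp2⟩ := hp
    constructor
    · simp only [mem_setOf_eq, hg_def]
      have : (0:ℝ) < x - p.2 := by simp only [mem_Iio] at hp2; linarith
      positivity
    · simp only [hs_def, mem_compl_iff, mem_preimage, mem_Iio, not_lt]
      exact le_of_lt hp1
  -- second conclusion: π (Iio x ×ˢ Ioi x) = 0
  have h2 : π (Set.Iio x ×ˢ Set.Ioi x) = 0 := by
    have hint0 : ∫ p in s, (g p.2 - (x - p.2)) ∂π = 0 := by
      rw [integral_sub hf_int.integrableOn hlin_int.integrableOn, hA_eq, hkey, sub_self]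
    have hnn : (0 : ℝ × ℝ → ℝ) ≤ᵐ[π.restrict s] fun p : ℝ × ℝ => g p.2 - (x - p.2) :=
      Filter.Eventually.of_forall fun p => by
        simp only [Pi.zero_apply, sub_nonneg]; exact le_max_left _ _
    have hae : (fun p : ℝ × ℝ => g p.2 - (x - p.2)) =ᵐ[π.restrict s] 0 :=
      (integral_eq_zero_iff_of_nonneg_ae hnn
        (hf_int.integrableOn.sub hlin_int.integrableOn)).mp hint0
    have hmeas2 : Measurable fun p : ℝ × ℝ => g p.2 - (x - p.2) :=
      hgs_meas.sub (measurable_const.sub measurable_snd)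
    have hz : π.restrict s {p : ℝ × ℝ | ¬ g p.2 - (x - p.2) = 0} = 0 := by
      rw [Filter.EventuallyEq, ae_iff] at hae
      simpa using hae
    rw [Measure.restrict_apply (show MeasurableSet {p : ℝ × ℝ | ¬ g p.2 - (x - p.2) = 0} from
      (hmeas2 (measurableSet_singleton 0)).compl)] at hz
    refine measure_mono_null (fun p hp => ?_) hz
    obtain ⟨hp1, hp2⟩ := hp
    constructor
    · simp only [mem_setOf_eq, hg_def]
      have hlt : x - p.2 < 0 := by simp only [mem_Ioi] at hp2; linarith
      have : max (x - p.2) 0 = 0 := max_eq_right (le_of_lt hlt)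
      rw [this]; linarith
    · exact hp1
  rw [h1, h2, add_zero]
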